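/- Let M ≥ 1 and let T be the star with center c and leaves v_1, …, v_M, rooted at c. Let P_j denote the path of T consisting of the single edge between c and v_j, and let 𝒯 = {T} ∪ {P_1, …, P_M}. Define capacities k_c = M and k_o = 1 for every other object o of T. Then: (1) {T} is feasible; (2) for every j, the set {T, P_j} is infeasible (so a greedy run that considers the subtree T first outputs the single subtree {T}); and (3) the set {P_1, …, P_M} is feasible and has cardinality M. Consequently the greedy algorithm can output a solution of size 1 while a feasible solution of size M exists, so the approximation ratio of the greedy algorithm is not better than M. -/

import Mathlib

/-!
The tight example for the greedy algorithm: `T` is the star with center `none` and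
`M` leaves `some 0, …, some (M-1)`, rooted at its center. The family of subtrees,
indexed by `Option (Fin M)`, consists of the whole star `T` (index `none`) and the
single-edge paths `P_j` from the center to the leaf `some j` (index `some j`).
Capacities: `M` on the center vertex and `1` on every other object (leaf or edge).
-/

open Finset

attribute [local instance] Classical.propDecidable

/-- An *object* of a graph on vertex type `V`: a vertex or a (potential) edge. -/
abbrev Object (V : Type) := V ⊕ Sym2 V

/-- The subtree of `G` with vertex set `s` contains the object `o`. -/
def ContainsObj {V : Type} (G : SimpleGraph V) (s : Finset V) : Object V → Prop
  | Sum.inl v => v ∈ s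
  | Sum.inr e => e ∈ G.edgeSet ∧ ∀ x ∈ e, x ∈ s

/-- The load induced by the subfamily `U` on the object `o`. -/
noncomputable def load {V ι : Type} (G : SimpleGraph V) (S : ι → Finset V)
    (U : Finset ι) (o : Object V) : ℕ :=
  (U.filter fun i => ContainsObj G (S i) o).card

/-- A subfamily of subtrees is feasible if it does not overload any object. -/
def Feasible {V ι : Type} (G : SimpleGraph V) (S : ι → Finset V)
    (k : Object V → ℕ) (U : Finset ι) : Prop :=
  ∀ o : Object V, load G S U o ≤ k o

/-- The star with center `none` and leaves `some j`, `j : Fin M`. -/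
def starG (M : ℕ) : SimpleGraph (Option (Fin M)) where
  Adj a b := a ≠ b ∧ (a = none ∨ b = none)
  symm := by
    constructor
    intro a b h
    exact ⟨h.1.symm, h.2.symm⟩
  loopless := by
    constructor
    intro a h
    exact h.1 rfl

/-- The family of subtrees: index `none` is the whole star `T`, and index `some j`
is the path `P_j` consisting of the single edge between the center and leaf `j`. -/
def starFam (M : ℕ) : Option (Fin M) → Finset (Option (Fin M))
  | none => univ
  | some j => {none, some j}

/-- Capacities: `M` on the center vertex, `1` on every other object. -/
def starCap (M : ℕ) : Object (Option (Fin M)) → ℕ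
  | Sum.inl none => M
  | _ => 1

/-- **Tight example for the greedy algorithm.** On the star with center capacity `M`
and all other capacities `1`: (1) the whole star `T` alone is feasible; (2) for every
`j`, the set `{T, P_j}` is infeasible (so a greedy run considering `T` first outputs
just `{T}`, of size 1); (3) the set `{P_1, …, P_M}` of all `M` single-edge paths is
feasible and has cardinality `M`. Hence the greedy algorithm can output a solution of
size `1` while a feasible solution of size `M` exists, so its approximation ratio is
not better than `M`. -/
theorem statement2 (M : ℕ) (hM : 1 ≤ M) :
    -- (1) `{T}` is feasible
    Feasible (starG M) (starFam M) (starCap M) {none} ∧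
    -- (2) for every `j`, the set `{T, P_j}` is infeasible
    (∀ j : Fin M, ¬ Feasible (starG M) (starFam M) (starCap M) {none, some j}) ∧
    -- (3) `{P_1, …, P_M}` is feasible and has cardinality `M`
    Feasible (starG M) (starFam M) (starCap M) (univ.filter fun i => i ≠ none) ∧
    (univ.filter fun i : Option (Fin M) => i ≠ none).card = M := by
  have hcap1 : ∀ o : Object (Option (Fin M)), 1 ≤ starCap M o := by
    rintro (v | e)
    · cases v with
      | none => exact hM
      | some v => exact le_refl 1
    · exact le_refl 1
  have hcard : (univ.filter fun i : Option (Fin M) => i ≠ none).card = M := by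
    rw [filter_ne']
    simp
  refine ⟨?_, ?_, ?_, hcard⟩
  · -- (1)
    intro o
    calc load (starG M) (starFam M) {none} o
        ≤ ({none} : Finset (Option (Fin M))).card := card_filter_le _ _
      _ = 1 := card_singleton _
      _ ≤ starCap M o := hcap1 o
  · -- (2)
    intro j hfeas
    have h := hfeas (Sum.inr s(none, some j))
    have hco : ∀ i ∈ ({none, some j} : Finset (Option (Fin M))),
        ContainsObj (starG M) (starFam M i) (Sum.inr s(none, some j)) := by
      intro i hi
      have hedge : s(none, some j) ∈ (starG M).edgeSet := by
        rw [SimpleGraph.mem_edgeSet]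
        exact ⟨(Option.some_ne_none j).symm, Or.inl rfl⟩
      simp only [mem_insert, mem_singleton] at hi
      rcases hi with rfl | rfl
      · exact ⟨hedge, fun x _ => mem_univ x⟩
      · refine ⟨hedge, fun x hx => ?_⟩
        rw [Sym2.mem_iff] at hx
        rcases hx with rfl | rfl <;> simp [starFam]
    have hload : load (starG M) (starFam M) {none, some j} (Sum.inr s(none, some j)) = 2 := by
      rw [load, filter_true_of_mem hco]
      simp
    rw [hload] at h
    have : starCap M (Sum.inr s(none, some j)) = 1 := rfl
    omega
  · -- (3)
    intro o
    rcases o with (v | e)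
    · cases v with
      | none =>
        calc load (starG M) (starFam M) _ (Sum.inl none)
            ≤ (univ.filter fun i : Option (Fin M) => i ≠ none).card := card_filter_le _ _
          _ = M := hcard
      | some v =>
        show _ ≤ 1
        rw [load]
        apply card_le_one.mpr
        intro a ha b hb
        simp only [mem_filter, mem_univ, true_and] at ha hb
        obtain ⟨ha1, ha2⟩ := ha
        obtain ⟨hb1, hb2⟩ := hb
        cases a with
        | none => exact absurd rfl ha1
        | some ja =>
          cases b with
          | none => exact absurd rfl hb1
          | some jb =>
            simp only [ContainsObj, starFam, mem_insert, mem_singleton] at ha2 hb2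
            rcases ha2 with h | h <;> rcases hb2 with h' | h' <;>
              simp_all
    · show _ ≤ 1
      rw [load]
      apply card_le_one.mpr
      intro a ha b hb
      simp only [mem_filter, mem_univ, true_and] at ha hb
      obtain ⟨ha1, ha2⟩ := ha
      obtain ⟨hb1, hb2⟩ := hb
      induction e using Sym2.ind with
      | _ x y =>
        obtain ⟨hxy, hmem⟩ := ha2
        obtain ⟨_, hmem'⟩ := hb2
        rw [SimpleGraph.mem_edgeSet] at hxy
        obtain ⟨hne, hc⟩ := hxy
        -- wlog x = none, y = some v
        have key : ∀ a : Option (Fin M), a ≠ none →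
            (∀ z ∈ s(x, y), z ∈ starFam M a) → ∃ v, a = some v ∧ (x = some v ∨ y = some v) := by
          intro a hane hz
          cases a with
          | none => exact absurd rfl hane
          | some va =>
            refine ⟨va, rfl, ?_⟩
            rcases hc with rfl | rfl
            · have := hz y (Sym2.mem_mk_right _ _)
              simp only [starFam, mem_insert, mem_singleton] at this
              rcases this with rfl | rfl
              · exact absurd rfl hne
              · exact Or.inr rfl
            · have := hz x (Sym2.mem_mk_left _ _)
              simp only [starFam, mem_insert, mem_singleton] at this
              rcases this with rfl | rfl
              · exact absurd rfl (Ne.symm hne)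
              · exact Or.inl rfl
        obtain ⟨va, rfl, hva⟩ := key a ha1 hmem
        obtain ⟨vb, rfl, hvb⟩ := key b hb1 hmem'
        rcases hc with rfl | rfl
        · rcases hva with h | h
          · exact absurd h.symm (by simp)
          · rcases hvb with h' | h'
            · exact absurd h'.symm (by simp)
            · cases Option.some_injective _ (h.symm.trans h'); rfl
        · rcases hva with h | h
          · rcases hvb with h' | h'
            · cases Option.some_injective _ (h.symm.trans h'); rfl
            · exact absurd h'.symm (by simp)
          · exact absurd h.symm (by simp)
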